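/- Let ν:[0,1]→ℝ be continuous and nonnegative, and n ≥ 1. If y:[0,1]→ℝ is continuous, y(0)=1, and satisfies y(r) = 1 + (1/(2n)) ∫₀ʳ (1 − (s/r)^{2n}) s ν(s) y(s) ds for all r∈(0,1], then y(r) ≥ 1 for all r∈[0,1] and y(r) ≤ exp((1/(2n)) ∫₀ʳ s ν(s) ds). -/

import Mathlib

open MeasureTheory Set

theorem stmt5 (ν y : ℝ → ℝ) (n : ℕ) (hn : 1 ≤ n)
    (hν : ContinuousOn ν (Set.Icc 0 1)) (hν0 : ∀ s ∈ Set.Icc (0:ℝ) 1, 0 ≤ ν s)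
    (hy : ContinuousOn y (Set.Icc 0 1)) (hy0 : y 0 = 1)
    (heq : ∀ r ∈ Set.Ioc (0:ℝ) 1,
      y r = 1 + (1/(2*(n:ℝ))) * ∫ s in (0:ℝ)..r, (1 - (s/r)^(2*n)) * s * ν s * y s) :
    ∀ r ∈ Set.Icc (0:ℝ) 1,
      1 ≤ y r ∧ y r ≤ Real.exp ((1/(2*(n:ℝ))) * ∫ s in (0:ℝ)..r, s * ν s) := by
  have hn1 : (1:ℝ) ≤ (n:ℝ) := by exact_mod_cast hn
  have h2n : (0:ℝ) < 2*(n:ℝ) := by linarith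
  have hcn : (0:ℝ) < 1/(2*(n:ℝ)) := by positivity
  -- kernel bounds
  have hker : ∀ r ∈ Ioc (0:ℝ) 1, ∀ s ∈ Icc (0:ℝ) r,
      0 ≤ 1 - (s/r)^(2*n) ∧ 1 - (s/r)^(2*n) ≤ 1 := by
    intro r hr s hs
    have h1 : 0 ≤ s/r := div_nonneg hs.1 hr.1.le
    have h2 : s/r ≤ 1 := div_le_one_of_le₀ hs.2 hr.1.le
    have h3 : (s/r)^(2*n) ≤ 1 := pow_le_one₀ h1 h2
    have h4 : 0 ≤ (s/r)^(2*n) := pow_nonneg h1 _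
    constructor <;> linarith
  -- nonnegativity of the main integrand knowing y ≥ 0 on [0,r)
  have key : ∀ r ∈ Ioc (0:ℝ) 1, (∀ s ∈ Ico (0:ℝ) r, 0 ≤ y s) →
      0 ≤ ∫ s in (0:ℝ)..r, (1 - (s/r)^(2*n)) * s * ν s * y s := by
    intro r hr hpos
    apply intervalIntegral.integral_nonneg hr.1.le
    intro u hu
    rcases eq_or_lt_of_le hu.2 with h | h
    · have : (u/r)^(2*n) = 1 := by rw [h, div_self hr.1.ne']; simp
      simp [this]
    · have hy' := hpos u ⟨hu.1, h⟩
      have hν' := hν0 u ⟨hu.1, hu.2.trans hr.2⟩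
      have hk := (hker r hr u hu).1
      have := mul_nonneg (mul_nonneg (mul_nonneg hk hu.1) hν') hy'
      linarith
  -- y is nonnegative on [0,1]
  have hynn : ∀ s ∈ Icc (0:ℝ) 1, 0 ≤ y s := by
    by_contra hcon
    push_neg at hcon
    obtain ⟨s₀, hs₀, hys₀⟩ := hcon
    have hCc : IsClosed (Icc (0:ℝ) 1 ∩ y ⁻¹' Iic 0) :=
      hy.preimage_isClosed_of_isClosed isClosed_Icc isClosed_Iic
    have hCne : (Icc (0:ℝ) 1 ∩ y ⁻¹' Iic 0).Nonempty := ⟨s₀, hs₀, hys₀.le⟩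
    have hCbd : BddBelow (Icc (0:ℝ) 1 ∩ y ⁻¹' Iic 0) := ⟨0, fun x hx => hx.1.1⟩
    set t := sInf (Icc (0:ℝ) 1 ∩ y ⁻¹' Iic 0) with ht
    have htC : t ∈ Icc (0:ℝ) 1 ∩ y ⁻¹' Iic 0 := hCc.csInf_mem hCne hCbd
    have hyt : y t ≤ 0 := htC.2
    have ht0 : 0 < t := by
      rcases eq_or_lt_of_le htC.1.1 with h | h
      · exfalso; rw [← h] at hyt; rw [hy0] at hyt; linarith
      · exact h
    have hpos : ∀ s ∈ Ico (0:ℝ) t, 0 ≤ y s := by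
      intro s hs
      by_contra hneg
      push_neg at hneg
      have hsC : s ∈ Icc (0:ℝ) 1 ∩ y ⁻¹' Iic 0 :=
        ⟨⟨hs.1, hs.2.le.trans htC.1.2⟩, hneg.le⟩
      exact absurd (csInf_le hCbd hsC) (not_le.mpr hs.2)
    have hint := key t ⟨ht0, htC.1.2⟩ hpos
    have := heq t ⟨ht0, htC.1.2⟩
    nlinarith [mul_nonneg hcn.le hint]
  -- y ≥ 1 on [0,1]
  have hge1 : ∀ r ∈ Icc (0:ℝ) 1, 1 ≤ y r := by
    intro r hr
    rcases eq_or_lt_of_le hr.1 with h | h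
    · rw [← h, hy0]
    · have hint := key r ⟨h, hr.2⟩ fun s hs => hynn s ⟨hs.1, hs.2.le.trans hr.2⟩
      have := heq r ⟨h, hr.2⟩
      nlinarith [mul_nonneg hcn.le hint]
  -- Gronwall part
  set g : ℝ → ℝ := fun s => 1/(2*(n:ℝ)) * (s * ν s) with hg
  have hgcont : ContinuousOn g (Icc 0 1) :=
    continuousOn_const.mul (continuousOn_id.mul hν)
  have hgnn : ∀ s ∈ Icc (0:ℝ) 1, 0 ≤ g s := fun s hs =>
    mul_nonneg hcn.le (mul_nonneg hs.1 (hν0 s hs))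
  have hgycont : ContinuousOn (fun s => g s * y s) (Icc 0 1) := hgcont.mul hy
  have hgyint : IntegrableOn (fun s => g s * y s) (Icc 0 1) :=
    hgycont.integrableOn_Icc
  have hgint : IntegrableOn g (Icc 0 1) := hgcont.integrableOn_Icc
  set F : ℝ → ℝ := fun r => ∫ s in (0:ℝ)..r, g s * y s with hF
  set E : ℝ → ℝ := fun r => ∫ s in (0:ℝ)..r, g s with hE
  have hFcont : ContinuousOn F (Icc 0 1) := by
    have := intervalIntegral.continuousOn_primitive_interval
      (f := fun s => g s * y s) (μ := volume) (a := 0) (b := 1)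
      (by rw [uIcc_of_le zero_le_one]; exact hgyint)
    rwa [uIcc_of_le zero_le_one] at this
  have hEcont : ContinuousOn E (Icc 0 1) := by
    have := intervalIntegral.continuousOn_primitive_interval
      (f := g) (μ := volume) (a := 0) (b := 1)
      (by rw [uIcc_of_le zero_le_one]; exact hgint)
    rwa [uIcc_of_le zero_le_one] at this
  -- y r ≤ 1 + F r
  have hyF : ∀ r ∈ Icc (0:ℝ) 1, y r ≤ 1 + F r := by
    intro r hr
    rcases eq_or_lt_of_le hr.1 with h | h
    · rw [← h, hy0]; simp [hF, intervalIntegral.integral_same]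
    · have hsub : Icc (0:ℝ) r ⊆ Icc 0 1 := Icc_subset_Icc le_rfl hr.2
      have hker_cont : ContinuousOn (fun s => (1 - (s/r)^(2*n)) * s * ν s * y s) (Icc 0 r) := by
        exact (((continuous_const.sub ((continuous_id.div_const r).pow (2*n))).continuousOn.mul
          continuousOn_id).mul (hν.mono hsub)).mul (hy.mono hsub)
      have hf1int : IntervalIntegrable (fun s => (1 - (s/r)^(2*n)) * s * ν s * y s)
          volume 0 r := by
        apply ContinuousOn.intervalIntegrable
        rwa [uIcc_of_le hr.1]
      have hf2int : IntervalIntegrable (fun s => g s * y s) volume 0 r := by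
        apply ContinuousOn.intervalIntegrable
        rw [uIcc_of_le hr.1]
        exact hgycont.mono hsub
      have hmono : ∫ s in (0:ℝ)..r, (1/(2*(n:ℝ))) * ((1 - (s/r)^(2*n)) * s * ν s * y s)
          ≤ F r := by
        rw [hF]
        apply intervalIntegral.integral_mono_on hr.1 (hf1int.const_mul _) hf2int
        intro u hu
        have hu1 : u ∈ Icc (0:ℝ) 1 := hsub hu
        have hk := hker r ⟨h, hr.2⟩ u hu
        have hν' := hν0 u hu1
        have hy' := hynn u hu1
        have h5 : (1 - (u/r)^(2*n)) * u * ν u * y u ≤ u * ν u * y u := by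
          nlinarith [mul_nonneg (mul_nonneg (mul_nonneg (sub_nonneg.mpr hk.2) hu.1) hν') hy']
        have : g u * y u = (1/(2*(n:ℝ))) * (u * ν u * y u) := by rw [hg]; ring
        rw [this]
        exact mul_le_mul_of_nonneg_left h5 hcn.le
      rw [intervalIntegral.integral_const_mul] at hmono
      have := heq r ⟨h, hr.2⟩
      linarith
  set G : ℝ → ℝ := fun r => (1 + F r) * Real.exp (-E r) with hG
  have hGcont : ContinuousOn G (Icc 0 1) :=
    (continuousOn_const.add hFcont).mul (Real.continuous_exp.comp_continuousOn hEcont.neg)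
  set G' : ℝ → ℝ := fun x =>
    g x * y x * Real.exp (-E x) + (1 + F x) * (Real.exp (-E x) * -g x) with hG'
  have hGd : ∀ x ∈ Ioo (0:ℝ) 1, HasDerivAt G (G' x) x := by
    intro x hx
    have hmem : Icc (0:ℝ) 1 ∈ nhds x := Icc_mem_nhds hx.1 hx.2
    have hmeas1 : StronglyMeasurableAtFilter (fun s => g s * y s) (nhds x) :=
      ⟨Icc 0 1, hmem, hgycont.aestronglyMeasurable measurableSet_Icc⟩
    have hmeas2 : StronglyMeasurableAtFilter g (nhds x) :=
      ⟨Icc 0 1, hmem, hgcont.aestronglyMeasurable measurableSet_Icc⟩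
    have hint1 : IntervalIntegrable (fun s => g s * y s) volume 0 x := by
      apply ContinuousOn.intervalIntegrable
      rw [uIcc_of_le hx.1.le]
      exact hgycont.mono (Icc_subset_Icc le_rfl hx.2.le)
    have hint2 : IntervalIntegrable g volume 0 x := by
      apply ContinuousOn.intervalIntegrable
      rw [uIcc_of_le hx.1.le]
      exact hgcont.mono (Icc_subset_Icc le_rfl hx.2.le)
    have hFd : HasDerivAt F (g x * y x) x :=
      intervalIntegral.integral_hasDerivAt_right hint1 hmeas1
        (hgycont.continuousAt hmem)
    have hEd : HasDerivAt E (g x) x :=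
      intervalIntegral.integral_hasDerivAt_right hint2 hmeas2
        (hgcont.continuousAt hmem)
    have hexp : HasDerivAt (fun r => Real.exp (-E r)) (Real.exp (-E x) * -g x) x :=
      (hEd.neg).exp
    have := (hFd.const_add 1).mul hexp
    simpa [hG, hG', Pi.mul_def] using this
  have hG'le : ∀ x ∈ Ioo (0:ℝ) 1, G' x ≤ 0 := by
    intro x hx
    have hx1 : x ∈ Icc (0:ℝ) 1 := ⟨hx.1.le, hx.2.le⟩
    have h1 := hgnn x hx1
    have h2 := hyF x hx1
    have h3 := (Real.exp_pos (-E x)).le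
    have := mul_nonneg (mul_nonneg h3 h1) (sub_nonneg.mpr h2)
    have heq2 : g x * y x * Real.exp (-E x) + (1 + F x) * (Real.exp (-E x) * -g x)
        = -(Real.exp (-E x) * g x * (1 + F x - y x)) := by ring
    rw [hG']
    simp only [heq2]
    linarith
  have hGanti : AntitoneOn G (Icc 0 1) := by
    apply antitoneOn_of_hasDerivWithinAt_nonpos (convex_Icc 0 1) hGcont
    · intro x hx
      rw [interior_Icc] at hx ⊢
      exact (hGd x hx).hasDerivWithinAt
    · intro x hx
      rw [interior_Icc] at hx
      exact hG'le x hx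
  -- conclude
  intro r hr
  refine ⟨hge1 r hr, ?_⟩
  have hG0 : G 0 = 1 := by simp [hG, hF, hE, intervalIntegral.integral_same]
  have hle : G r ≤ 1 := by
    rw [← hG0]
    exact hGanti (left_mem_Icc.mpr zero_le_one) hr hr.1
  have h2 := mul_le_mul_of_nonneg_right hle (Real.exp_pos (E r)).le
  rw [hG] at h2
  rw [one_mul, mul_assoc, ← Real.exp_add, neg_add_cancel, Real.exp_zero, mul_one] at h2
  have hEeq : E r = (1/(2*(n:ℝ))) * ∫ s in (0:ℝ)..r, s * ν s := by
    rw [hE]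
    exact intervalIntegral.integral_const_mul _ _
  rw [← hEeq]
  linarith [hyF r hr]
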